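/- (Proposition 2.1.) Let K : (T ∪ {t₀}) × (T ∪ {t₀}) → ℝ be a symmetric measurable kernel with nonnegative quadratic form on finite signed measures on T, f : T ∪ {t₀} → ℝ^m, t₀ ∉ T. Suppose there exist a finite signed measure ζ_{t₀} on T with ∫_T K(t,s) ζ_{t₀}(dt) = K(t₀,s) for all s ∈ T, and an m-tuple ζ = (ζ₁,…,ζ_m) of finite signed measures on T with ∫_T K(t,s) ζ(dt) = f(s) (componentwise) for all s ∈ T, and that the m×m matrix C with entries C_{ij} = ∫_T f_i(t) ζ_j(dt) is invertible. Set c = f(t₀) − ∫_T f(t) ζ_{t₀}(dt) and Q* = ζ_{t₀} + Σ_j (C⁻¹ᵀ c)_j ζ_j (i.e., Q*(dt) = ζ_{t₀}(dt) + cᵀ C⁻¹ ζ(dt)). Then for every finite signed measure Q on T with ∫_T f dQ = f(t₀) one has M(Q) ≥ M(Q*), where M(Q) = K(t₀,t₀) − 2∫_T K(t,t₀) Q(dt) + ∬_{T×T} K(t,s) Q(dt)Q(ds). -/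

import Mathlib

open MeasureTheory

/-- Integral of a real function against a finite signed measure, via the Jordan
decomposition. -/
noncomputable def sInt {α : Type*} [MeasurableSpace α] (μ : SignedMeasure α) (g : α → ℝ) : ℝ :=
  (∫ x, g x ∂μ.toJordanDecomposition.posPart) - ∫ x, g x ∂μ.toJordanDecomposition.negPart

namespace BlupAux

variable {α : Type*} [MeasurableSpace α]

/-- integrable with respect to every finite measure -/
def Intble (g : α → ℝ) : Prop := ∀ (μ : Measure α), IsFiniteMeasure μ → Integrable g μ

lemma intble_of_bdd {g : α → ℝ} (hg : Measurable g) {C : ℝ} (hb : ∀ x, |g x| ≤ C) :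
    Intble g := fun μ hμ =>
  have : IsFiniteMeasure μ := hμ
  (integrable_const C).mono' hg.aestronglyMeasurable
    (Filter.Eventually.of_forall fun x => by simpa [Real.norm_eq_abs] using hb x)

lemma Intble.sub {g h : α → ℝ} (hg : Intble g) (hh : Intble h) :
    Intble (fun x => g x - h x) := fun μ hμ => (hg μ hμ).sub (hh μ hμ)

lemma Intble.add {g h : α → ℝ} (hg : Intble g) (hh : Intble h) :
    Intble (fun x => g x + h x) := fun μ hμ => (hg μ hμ).add (hh μ hμ)

lemma Intble.const_mul {g : α → ℝ} (hg : Intble g) (r : ℝ) :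
    Intble (fun x => r * g x) := fun μ hμ => (hg μ hμ).const_mul r

lemma Intble.finset_sum {ι : Type*} (s : Finset ι) {g : ι → α → ℝ}
    (hg : ∀ j ∈ s, Intble (g j)) : Intble (fun x => ∑ j ∈ s, g j x) := fun μ hμ =>
  integrable_finset_sum s (fun j hj => hg j hj μ hμ)

lemma sInt_eq (P : SignedMeasure α) (μ ν : Measure α)
    [IsFiniteMeasure μ] [IsFiniteMeasure ν]
    (h : P = μ.toSignedMeasure - ν.toSignedMeasure)
    {g : α → ℝ} (hg : Intble g) :
    sInt P g = (∫ x, g x ∂μ) - ∫ x, g x ∂ν := by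
  have hP := P.toSignedMeasure_toJordanDecomposition
  unfold JordanDecomposition.toSignedMeasure at hP
  have hP2 := hP.trans h
  rw [sub_eq_sub_iff_add_eq_add] at hP2
  have key : P.toJordanDecomposition.posPart + ν = μ + P.toJordanDecomposition.negPart := by
    rw [← MeasureTheory.Measure.toSignedMeasure_eq_toSignedMeasure_iff,
      Measure.toSignedMeasure_add, Measure.toSignedMeasure_add]
    exact hP2
  have h1 : (∫ x, g x ∂P.toJordanDecomposition.posPart) + ∫ x, g x ∂ν
      = (∫ x, g x ∂μ) + ∫ x, g x ∂P.toJordanDecomposition.negPart := by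
    rw [← integral_add_measure (hg _ inferInstance) (hg _ inferInstance),
      ← integral_add_measure (hg _ inferInstance) (hg _ inferInstance), key]
  unfold sInt
  linarith

lemma sInt_add (P R : SignedMeasure α) {g : α → ℝ} (hg : Intble g) :
    sInt (P + R) g = sInt P g + sInt R g := by
  have h : P + R =
      (P.toJordanDecomposition.posPart + R.toJordanDecomposition.posPart).toSignedMeasure
      - (P.toJordanDecomposition.negPart + R.toJordanDecomposition.negPart).toSignedMeasure := by
    rw [Measure.toSignedMeasure_add, Measure.toSignedMeasure_add]
    have hP := P.toSignedMeasure_toJordanDecomposition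
    have hR := R.toSignedMeasure_toJordanDecomposition
    unfold JordanDecomposition.toSignedMeasure at hP hR
    conv_lhs => rw [← hP, ← hR]
    abel
  rw [sInt_eq (P + R) _ _ h hg,
    integral_add_measure (hg _ inferInstance) (hg _ inferInstance),
    integral_add_measure (hg _ inferInstance) (hg _ inferInstance)]
  unfold sInt; ring

lemma sInt_zero (g : α → ℝ) : sInt (0 : SignedMeasure α) g = 0 := by
  unfold sInt
  rw [MeasureTheory.SignedMeasure.toJordanDecomposition_zero]
  simp

lemma sInt_neg (P : SignedMeasure α) (g : α → ℝ) : sInt (-P) g = - sInt P g := by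
  unfold sInt
  rw [MeasureTheory.SignedMeasure.toJordanDecomposition_neg]
  rw [MeasureTheory.JordanDecomposition.neg_posPart, MeasureTheory.JordanDecomposition.neg_negPart]
  ring

lemma sInt_smul (P : SignedMeasure α) (r : ℝ) {g : α → ℝ} (hg : Intble g) :
    sInt (r • P) g = r * sInt P g := by
  rcases le_or_gt 0 r with hr | hr
  · have h : r • P = (r.toNNReal • P.toJordanDecomposition.posPart).toSignedMeasure
        - (r.toNNReal • P.toJordanDecomposition.negPart).toSignedMeasure := by
      rw [Measure.toSignedMeasure_smul, Measure.toSignedMeasure_smul]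
      have hP := P.toSignedMeasure_toJordanDecomposition
      unfold JordanDecomposition.toSignedMeasure at hP
      conv_lhs => rw [← hP]
      ext s hs
      simp [NNReal.smul_def, Real.coe_toNNReal r hr, mul_sub]
    rw [sInt_eq _ _ _ h hg, integral_smul_nnreal_measure, integral_smul_nnreal_measure]
    unfold sInt
    rw [NNReal.smul_def, NNReal.smul_def, Real.coe_toNNReal r hr]
    simp only [smul_eq_mul]; ring
  · have h : r • P = ((-r).toNNReal • P.toJordanDecomposition.negPart).toSignedMeasure
        - ((-r).toNNReal • P.toJordanDecomposition.posPart).toSignedMeasure := by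
      rw [Measure.toSignedMeasure_smul, Measure.toSignedMeasure_smul]
      have hP := P.toSignedMeasure_toJordanDecomposition
      unfold JordanDecomposition.toSignedMeasure at hP
      conv_lhs => rw [← hP]
      ext s hs
      simp [hs, NNReal.smul_def, Real.coe_toNNReal _ (by linarith : (0:ℝ) ≤ -r)]
      ring
    rw [sInt_eq _ _ _ h hg, integral_smul_nnreal_measure, integral_smul_nnreal_measure]
    unfold sInt
    rw [NNReal.smul_def, NNReal.smul_def, Real.coe_toNNReal _ (by linarith : (0:ℝ) ≤ -r)]
    simp only [smul_eq_mul]; ring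

lemma sInt_finset_sum {ι : Type*} (s : Finset ι) (P : ι → SignedMeasure α)
    {g : α → ℝ} (hg : Intble g) :
    sInt (∑ j ∈ s, P j) g = ∑ j ∈ s, sInt (P j) g := by
  induction s using Finset.cons_induction with
  | empty => simpa using sInt_zero g
  | cons j s hj ih => rw [Finset.sum_cons, Finset.sum_cons, sInt_add _ _ hg, ih]

lemma sInt_fun_sub (P : SignedMeasure α) {g h : α → ℝ} (hg : Intble g) (hh : Intble h) :
    sInt P (fun x => g x - h x) = sInt P g - sInt P h := by
  unfold sInt
  rw [integral_sub (hg _ inferInstance) (hh _ inferInstance),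
    integral_sub (hg _ inferInstance) (hh _ inferInstance)]
  ring

lemma sInt_fun_add (P : SignedMeasure α) {g h : α → ℝ} (hg : Intble g) (hh : Intble h) :
    sInt P (fun x => g x + h x) = sInt P g + sInt P h := by
  unfold sInt
  rw [integral_add (hg _ inferInstance) (hh _ inferInstance),
    integral_add (hg _ inferInstance) (hh _ inferInstance)]
  ring

lemma sInt_fun_const_mul (P : SignedMeasure α) (g : α → ℝ) (r : ℝ) :
    sInt P (fun x => r * g x) = r * sInt P g := by
  unfold sInt
  rw [integral_const_mul, integral_const_mul]
  ring

lemma sInt_fun_zero (P : SignedMeasure α) : sInt P (fun _ => (0:ℝ)) = 0 := by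
  unfold sInt; simp

lemma sInt_fun_sum {ι : Type*} (P : SignedMeasure α) (s : Finset ι) {g : ι → α → ℝ}
    (hg : ∀ j ∈ s, Intble (g j)) :
    sInt P (fun x => ∑ j ∈ s, g j x) = ∑ j ∈ s, sInt P (g j) := by
  induction s using Finset.cons_induction with
  | empty => simpa using sInt_fun_zero P
  | cons j s hj ih =>
      rw [Finset.sum_cons]
      have : (fun x => ∑ k ∈ Finset.cons j s hj, g k x)
          = fun x => g j x + ∑ k ∈ s, g k x := by
        funext x; rw [Finset.sum_cons]
      rw [this, sInt_fun_add P (hg j (Finset.mem_cons_self j s))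
        (Intble.finset_sum s fun k hk => hg k (Finset.mem_cons_of_mem hk)),
        ih (fun k hk => hg k (Finset.mem_cons_of_mem hk))]

lemma intble_param_int (ν : Measure α) [IsFiniteMeasure ν] {H : α → α → ℝ}
    (hH : Measurable (Function.uncurry H)) {C : ℝ} (hb : ∀ x y, |H x y| ≤ C) :
    Intble (fun t => ∫ s, H t s ∂ν) := by
  refine intble_of_bdd hH.stronglyMeasurable.integral_prod_right.measurable
    (C := |C| * (ν Set.univ).toReal) (fun t => ?_)
  rw [← Real.norm_eq_abs]
  refine norm_integral_le_of_norm_le_const (Filter.Eventually.of_forall fun s => ?_)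
  rw [Real.norm_eq_abs]; exact (hb t s).trans (le_abs_self C)

lemma intble_param_int' (μ : Measure α) [IsFiniteMeasure μ] {H : α → α → ℝ}
    (hH : Measurable (Function.uncurry H)) {C : ℝ} (hb : ∀ x y, |H x y| ≤ C) :
    Intble (fun s => ∫ t, H t s ∂μ) := by
  refine intble_of_bdd hH.stronglyMeasurable.integral_prod_left.measurable
    (C := |C| * (μ Set.univ).toReal) (fun s => ?_)
  rw [← Real.norm_eq_abs]
  refine norm_integral_le_of_norm_le_const (Filter.Eventually.of_forall fun t => ?_)
  rw [Real.norm_eq_abs]; exact (hb t s).trans (le_abs_self C)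

lemma intble_sInt_inner (W : SignedMeasure α) {H : α → α → ℝ}
    (hH : Measurable (Function.uncurry H)) {C : ℝ} (hb : ∀ x y, |H x y| ≤ C) :
    Intble (fun t => sInt W fun s => H t s) := by
  have : (fun t => sInt W fun s => H t s)
      = fun t => (∫ s, H t s ∂W.toJordanDecomposition.posPart)
        - ∫ s, H t s ∂W.toJordanDecomposition.negPart := rfl
  rw [this]
  exact (intble_param_int _ hH hb).sub (intble_param_int _ hH hb)

lemma sInt_swap (P W : SignedMeasure α) {H : α → α → ℝ}
    (hH : Measurable (Function.uncurry H)) {C : ℝ} (hb : ∀ x y, |H x y| ≤ C) :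
    sInt P (fun t => sInt W fun s => H t s) = sInt W (fun s => sInt P fun t => H t s) := by
  have swap : ∀ (μ ν : Measure α), IsFiniteMeasure μ → IsFiniteMeasure ν →
      ∫ t, ∫ s, H t s ∂ν ∂μ = ∫ s, ∫ t, H t s ∂μ ∂ν := by
    intro μ ν hμ hν
    have : IsFiniteMeasure μ := hμ
    have : IsFiniteMeasure ν := hν
    exact integral_integral_swap
      (intble_of_bdd (g := Function.uncurry H) hH (C := C)
        (fun p => hb p.1 p.2) _ inferInstance)
  have eL : sInt P (fun t => sInt W fun s => H t s)
      = sInt P (fun t => ∫ s, H t s ∂W.toJordanDecomposition.posPart)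
        - sInt P (fun t => ∫ s, H t s ∂W.toJordanDecomposition.negPart) := by
    rw [← sInt_fun_sub P (intble_param_int _ hH hb) (intble_param_int _ hH hb)]
    rfl
  have eR : sInt W (fun s => sInt P fun t => H t s)
      = sInt W (fun s => ∫ t, H t s ∂P.toJordanDecomposition.posPart)
        - sInt W (fun s => ∫ t, H t s ∂P.toJordanDecomposition.negPart) := by
    rw [← sInt_fun_sub W (intble_param_int' _ hH hb) (intble_param_int' _ hH hb)]
    rfl
  rw [eL, eR]
  unfold sInt
  rw [swap _ _ inferInstance inferInstance, swap _ _ inferInstance inferInstance,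
    swap _ _ inferInstance inferInstance, swap _ _ inferInstance inferInstance]
  ring

end BlupAux

open BlupAux

/-- Proposition 2.1.  If `ζ_{t₀}` solves `∫_T K(t,s) ζ_{t₀}(dt) = K(t₀,s)`,
the vector measure `ζ` solves `∫_T K(t,s) ζ(dt) = f(s)`, and the matrix
`C = ∫_T f ζᵀ` is invertible, then `Q* = ζ_{t₀} + cᵀ C⁻¹ ζ` minimizes the MSE functional
`M(Q) = K(t₀,t₀) − 2∫ K(t,t₀) Q(dt) + ∬ K dQ dQ` among all unbiased `Q`. -/
theorem blup_point_optimality_via_C {d m : ℕ}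
    (T : Set (Fin d → ℝ)) (hT : MeasurableSet T)
    (t0 : Fin d → ℝ) (ht0 : t0 ∉ T)
    (K : (Fin d → ℝ) → (Fin d → ℝ) → ℝ)
    (hKmeas : Measurable (Function.uncurry K))
    (hKbd : ∃ C, ∀ t s, |K t s| ≤ C)
    (hKsym : ∀ t s, K t s = K s t)
    (hKpos : ∀ R : SignedMeasure T, 0 ≤ sInt R fun t => sInt R fun s => K t.1 s.1)
    (f : (Fin d → ℝ) → Fin m → ℝ)
    (hfmeas : ∀ i, Measurable fun t => f t i)
    (hfbd : ∃ C, ∀ t i, |f t i| ≤ C)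
    -- the measure `ζ_{t₀}` solving `∫_T K(t,s) ζ_{t₀}(dt) = K(t₀,s)`:
    (ζt0 : SignedMeasure T)
    (hζt0 : ∀ s : T, sInt ζt0 (fun t => K t.1 s.1) = K t0 s.1)
    -- the vector measure `ζ` solving `∫_T K(t,s) ζ(dt) = f(s)` componentwise:
    (ζ : Fin m → SignedMeasure T)
    (hζ : ∀ (s : T) (j : Fin m), sInt (ζ j) (fun t => K t.1 s.1) = f s.1 j)
    -- the matrix `C` with entries `C_{ij} = ∫_T f_i dζ_j`, assumed invertible:
    (C : Matrix (Fin m) (Fin m) ℝ)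
    (hC : ∀ i j, C i j = sInt (ζ j) fun t => f t.1 i)
    (hCinv : IsUnit C.det)
    (c : Fin m → ℝ)
    (hc : ∀ i, c i = f t0 i - sInt ζt0 fun t => f t.1 i)
    (Qstar : SignedMeasure T)
    (hQstar : Qstar = ζt0 + ∑ j, (∑ i, c i * C⁻¹ i j) • ζ j)
    (M : SignedMeasure T → ℝ)
    (hM : ∀ Q : SignedMeasure T,
      M Q = K t0 t0 - 2 * (sInt Q fun t => K t.1 t0)
        + (sInt Q fun t => sInt Q fun s => K t.1 s.1))
    (Q : SignedMeasure T)
    (hQ : ∀ i, sInt Q (fun t => f t.1 i) = f t0 i) :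
    M Qstar ≤ M Q := by
  classical
  obtain ⟨C0, hC0⟩ := hKbd
  obtain ⟨Cf0, hCf0⟩ := hfbd
  -- measurability on the subtype
  have mK : Measurable (Function.uncurry fun (t s : T) => K t.1 s.1) := by
    have : (Function.uncurry fun (t s : T) => K t.1 s.1)
        = (Function.uncurry K) ∘ (fun p : T × T => (p.1.1, p.2.1)) := rfl
    rw [this]
    exact hKmeas.comp
      ((measurable_subtype_coe.comp measurable_fst).prodMk
        (measurable_subtype_coe.comp measurable_snd))
  have hbK : ∀ (t s : T), |K t.1 s.1| ≤ C0 := fun t s => hC0 t.1 s.1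
  have mKs : ∀ v : Fin d → ℝ, Measurable fun t : T => K t.1 v := fun v =>
    hKmeas.comp (measurable_subtype_coe.prodMk measurable_const)
  have mKs' : ∀ v : Fin d → ℝ, Measurable fun t : T => K v t.1 := fun v =>
    hKmeas.comp (measurable_const.prodMk measurable_subtype_coe)
  have hIK : ∀ v : Fin d → ℝ, Intble (fun t : T => K t.1 v) := fun v =>
    intble_of_bdd (mKs v) (C := C0) (fun t => hC0 t.1 v)
  have hIK' : ∀ v : Fin d → ℝ, Intble (fun t : T => K v t.1) := fun v =>
    intble_of_bdd (mKs' v) (C := C0) (fun t => hC0 v t.1)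
  have hIf : ∀ j : Fin m, Intble (fun t : T => f t.1 j) := fun j =>
    intble_of_bdd ((hfmeas j).comp measurable_subtype_coe) (C := Cf0) (fun t => hCf0 t.1 j)
  have hIB : ∀ W : SignedMeasure T, Intble (fun t : T => sInt W fun s => K t.1 s.1) :=
    fun W => intble_sInt_inner W mK hbK
  -- notation
  set a : Fin m → ℝ := fun j => ∑ i, c i * C⁻¹ i j with ha
  set R : SignedMeasure T := Q - Qstar with hR
  have hQR : Q = Qstar + R := by rw [hR]; abel
  -- linearity of `sInt · g` along `Q = Qstar + R`
  have hsplitQ : ∀ g : T → ℝ, Intble g → sInt Q g = sInt Qstar g + sInt R g := by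
    intro g hg
    rw [hQR]; exact sInt_add _ _ hg
  -- `sInt Qstar` of a function, via the defining combination
  have hQstarInt : ∀ g : T → ℝ, Intble g →
      sInt Qstar g = sInt ζt0 g + ∑ j, a j * sInt (ζ j) g := by
    intro g hg
    rw [hQstar, sInt_add _ _ hg, sInt_finset_sum _ _ hg]
    congr 1
    exact Finset.sum_congr rfl fun j _ => sInt_smul _ _ hg
  -- values of `sInt R` on the regressors
  have hFR : ∀ j, sInt R (fun t => f t.1 j) = c j - ∑ k, a k * C j k := by
    intro j
    have h1 : sInt Q (fun t => f t.1 j)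
        = sInt Qstar (fun t => f t.1 j) + sInt R (fun t => f t.1 j) := hsplitQ _ (hIf j)
    have h2 : sInt Qstar (fun t => f t.1 j)
        = (f t0 j - c j) + ∑ k, a k * C j k := by
      rw [hQstarInt _ (hIf j)]
      have : sInt ζt0 (fun t => f t.1 j) = f t0 j - c j := by rw [hc j]; ring
      rw [this]
      congr 1
      exact Finset.sum_congr rfl fun k _ => by rw [← hC j k]
    rw [hQ j] at h1
    rw [h2] at h1
    linarith
  -- matrix algebra: ∑ j, a j * (c j - ∑ k, a k * C j k) = 0
  have hCC : C⁻¹ * C = 1 := Matrix.nonsing_inv_mul C hCinv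
  have hsumaC : ∀ k, (∑ j, a j * C j k) = c k := by
    intro k
    calc (∑ j, a j * C j k) = ∑ j, ∑ i, c i * C⁻¹ i j * C j k := by
          simp only [ha, Finset.sum_mul]
      _ = ∑ i, ∑ j, c i * (C⁻¹ i j * C j k) := by
          rw [Finset.sum_comm]
          exact Finset.sum_congr rfl fun i _ => Finset.sum_congr rfl fun j _ => by ring
      _ = ∑ i, c i * (C⁻¹ * C) i k := by
          simp only [Matrix.mul_apply, Finset.mul_sum]
      _ = c k := by
          rw [hCC]
          simp [Matrix.one_apply, mul_ite, mul_one, mul_zero]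
  have hzero : (∑ j, a j * sInt R (fun t => f t.1 j)) = 0 := by
    have : (∑ j, a j * sInt R (fun t => f t.1 j))
        = (∑ j, a j * c j) - ∑ j, a j * ∑ k, a k * C j k := by
      rw [← Finset.sum_sub_distrib]
      exact Finset.sum_congr rfl fun j _ => by rw [hFR j]; ring
    rw [this]
    have h2 : (∑ j, a j * ∑ k, a k * C j k) = ∑ k, a k * c k := by
      calc (∑ j, a j * ∑ k, a k * C j k) = ∑ j, ∑ k, a k * (a j * C j k) := by
            refine Finset.sum_congr rfl fun j _ => ?_
            rw [Finset.mul_sum]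
            refine Finset.sum_congr rfl fun k _ => ?_
            ring
        _ = ∑ k, ∑ j, a k * (a j * C j k) := Finset.sum_comm
        _ = ∑ k, a k * ∑ j, a j * C j k := by
            refine Finset.sum_congr rfl fun k _ => ?_
            rw [Finset.mul_sum]
        _ = ∑ k, a k * c k := by
            refine Finset.sum_congr rfl fun k _ => ?_
            rw [hsumaC k]
    rw [h2]
    ring
  -- inner evaluation of Qstar against the kernel
  have hE : ∀ u : T, sInt Qstar (fun s => K s.1 u.1) = K t0 u.1 + ∑ j, a j * f u.1 j := by
    intro u
    rw [hQstarInt _ (hIK u.1), hζt0 u]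
    congr 1
    exact Finset.sum_congr rfl fun j _ => by rw [hζ u j]
  -- B(R, Qstar) = L R
  have hLR : sInt R (fun t => sInt Qstar fun s => K t.1 s.1)
      = sInt R (fun t => K t.1 t0) := by
    have e1 : (fun t : T => sInt Qstar fun s => K t.1 s.1)
        = fun t : T => K t0 t.1 + ∑ j, a j * f t.1 j := by
      funext t
      have : (fun s : T => K t.1 s.1) = fun s : T => K s.1 t.1 := by
        funext s; exact hKsym _ _
      rw [this, hE t]
    rw [e1, sInt_fun_add R (hIK' t0)
      (Intble.finset_sum Finset.univ fun j _ => (hIf j).const_mul (a j))]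
    have e2 : sInt R (fun t : T => ∑ j, a j * f t.1 j) = 0 := by
      rw [sInt_fun_sum R Finset.univ fun j _ => (hIf j).const_mul (a j)]
      calc (∑ j, sInt R fun t : T => a j * f t.1 j)
          = ∑ j, a j * sInt R (fun t : T => f t.1 j) :=
            Finset.sum_congr rfl fun j _ => sInt_fun_const_mul R _ (a j)
        _ = 0 := hzero
    rw [e2, add_zero]
    congr 1
    funext t
    exact hKsym t0 t.1
  -- B(Qstar, R) = B(R, Qstar)
  have hswap : sInt Qstar (fun t => sInt R fun s => K t.1 s.1)
      = sInt R (fun t => sInt Qstar fun s => K t.1 s.1) := by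
    rw [sInt_swap Qstar R mK hbK]
    congr 1
    funext u
    congr 1
    funext v
    exact hKsym _ _
  -- assemble
  have hL : sInt Q (fun t => K t.1 t0)
      = sInt Qstar (fun t => K t.1 t0) + sInt R (fun t => K t.1 t0) :=
    hsplitQ _ (hIK t0)
  have hBB : (sInt Q fun t => sInt Q fun s => K t.1 s.1)
      = (sInt Qstar fun t => sInt Qstar fun s => K t.1 s.1)
        + 2 * sInt R (fun t => K t.1 t0)
        + (sInt R fun t => sInt R fun s => K t.1 s.1) := by
    have inner : ∀ P : SignedMeasure T,
        (fun t : T => sInt Q fun s => K t.1 s.1)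
        = fun t : T => (sInt Qstar fun s => K t.1 s.1) + (sInt R fun s => K t.1 s.1) := by
      intro _
      funext t
      rw [hQR]
      exact sInt_add _ _ (hIK' t.1)
    have step1 : (sInt Q fun t => sInt Q fun s => K t.1 s.1)
        = (sInt Q fun t => sInt Qstar fun s => K t.1 s.1)
          + (sInt Q fun t => sInt R fun s => K t.1 s.1) := by
      rw [inner Q]
      exact sInt_fun_add Q (hIB Qstar) (hIB R)
    rw [step1, hsplitQ _ (hIB Qstar), hsplitQ _ (hIB R), hswap, hLR]
    ring
  have hpos := hKpos R
  rw [hM Q, hM Qstar, hL, hBB]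
  linarith
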